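/- (Cardinality bound for the dominating Bernoulli process) Let K be a Hermitian PSD matrix with maximal eigenvalue λ_max(K) < 1, defining a DPP Y, and let X be the Bernoulli process with q_k = K(k,k) + K_{{k}×{1:k−1}} ((I−K)_{{1:k−1}})^{-1} K_{{1:k−1}×{k}}. Then 𝔼(|X|) = Σ_k q_k ≤ (1 + λ_max(K) / (2(1 − λ_max(K)))) · Tr(K), and Tr(K) = 𝔼(|Y|). -/

import Mathlib

/-- The `k`-th Bernoulli probability `q_k = K(k,k) + K_{{k}×{1:k−1}}
((I−K)_{{1:k−1}})⁻¹ K_{{1:k−1}×{k}}` of the dominating Bernoulli process. -/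
noncomputable def bernoulliQ {N : ℕ} (K : Matrix (Fin N) (Fin N) ℝ) (k : Fin N) : ℝ :=
  K k k + ∑ i : {i : Fin N // i < k}, ∑ j : {j : Fin N // j < k},
    K k i.1 *
      ((((1 : Matrix (Fin N) (Fin N) ℝ) - K).submatrix
          (fun a : {i : Fin N // i < k} => a.1)
          (fun a : {j : Fin N // j < k} => a.1))⁻¹ i j) *
      K j.1 k

/-- The principal submatrix of `K` indexed by a finite subset `A`. -/
noncomputable def subMat {N : ℕ} (K : Matrix (Fin N) (Fin N) ℝ) (A : Finset (Fin N)) :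
    Matrix A A ℝ :=
  K.submatrix (fun i : A => (i : Fin N)) (fun j : A => (j : Fin N))

open Matrix
lemma myPSD {N : ℕ} (K : Matrix (Fin N) (Fin N) ℝ) (hH : K.IsHermitian) (lam : ℝ)
    (hmax : ∀ i, hH.eigenvalues i ≤ lam) :
    (lam • (1 : Matrix (Fin N) (Fin N) ℝ) - K).PosSemidef := by
  set U := (hH.eigenvectorUnitary : Matrix (Fin N) (Fin N) ℝ) with hUdef
  have hU : U * star U = 1 := (Matrix.mem_unitaryGroup_iff).mp hH.eigenvectorUnitary.2
  have key : lam • (1 : Matrix (Fin N) (Fin N) ℝ) - K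
      = U * (Matrix.diagonal (fun i => lam - hH.eigenvalues i)) * star U := by
    have h := hH.spectral_theorem
    rw [Unitary.conjStarAlgAut_apply] at h
    have hdiag : Matrix.diagonal (fun i => lam - hH.eigenvalues i)
        = lam • (1 : Matrix (Fin N) (Fin N) ℝ)
          - Matrix.diagonal (RCLike.ofReal ∘ hH.eigenvalues) := by
      simp [Matrix.smul_one_eq_diagonal, ← Matrix.diagonal_sub]
    rw [hdiag, Matrix.mul_sub, Matrix.sub_mul, ← h]
    congr 1
    rw [Matrix.mul_smul, Matrix.smul_mul, mul_one, hU]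
  rw [key, Matrix.star_eq_conjTranspose]
  exact (Matrix.PosSemidef.diagonal (fun i => sub_nonneg.mpr (hmax i))).mul_mul_conjTranspose_same U

lemma quadK {N : ℕ} (K : Matrix (Fin N) (Fin N) ℝ) (hH : K.IsHermitian) (lam : ℝ)
    (hmax : ∀ i, hH.eigenvalues i ≤ lam) (x : Fin N → ℝ) :
    dotProduct x (K *ᵥ x) ≤ lam * dotProduct x x := by
  have h := (myPSD K hH lam hmax).dotProduct_mulVec_nonneg x
  simp only [Matrix.sub_mulVec, Matrix.smul_mulVec, Matrix.one_mulVec,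
    dotProduct_sub, dotProduct_smul, star_trivial, smul_eq_mul] at h
  linarith

lemma quadSub {N : ℕ} (K : Matrix (Fin N) (Fin N) ℝ) (hH : K.IsHermitian) (lam : ℝ)
    (hmax : ∀ i, hH.eigenvalues i ≤ lam) (x : Fin N → ℝ) :
    (1 - lam) * dotProduct x x
      ≤ dotProduct x (((1 : Matrix (Fin N) (Fin N) ℝ) - K) *ᵥ x) := by
  have h := quadK K hH lam hmax x
  simp only [Matrix.sub_mulVec, Matrix.one_mulVec, dotProduct_sub]
  linarith

/-- extension by zero -/
noncomputable def extF {N : ℕ} (k : Fin N) (w : {i : Fin N // i < k} → ℝ) : Fin N → ℝ :=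
  fun j => if h : j < k then w ⟨j, h⟩ else 0

lemma sum_extF {N : ℕ} (k : Fin N) (f : Fin N → ℝ) (w : {i : Fin N // i < k} → ℝ) :
    ∑ j : Fin N, f j * extF k w j = ∑ j : {i : Fin N // i < k}, f j.1 * w j := by
  classical
  rw [← Finset.sum_filter_of_ne (p := fun j => j < k) (s := Finset.univ)
      (f := fun j => f j * extF k w j) (by
        intro x _ hx
        by_contra h
        exact hx (by simp [extF, h]))]
  rw [Finset.sum_subtype (p := fun j => j < k) (Finset.univ.filter (fun j => j < k)) (by simp)
      (fun j => f j * extF k w j)]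
  refine Finset.sum_congr rfl fun j _ => ?_
  simp [extF, j.2]

lemma invBound {n : Type*} [Fintype n] [DecidableEq n] (M : Matrix n n ℝ) (hM : M.PosDef)
    (c : ℝ) (hc : 0 < c) (hq : ∀ w : n → ℝ, c * dotProduct w w ≤ dotProduct w (M *ᵥ w))
    (v : n → ℝ) : dotProduct v (M⁻¹ *ᵥ v) ≤ (1 / c) * dotProduct v v := by
  set w : n → ℝ := M⁻¹ *ᵥ v with hw
  have hMw : M *ᵥ w = v := by
    rw [hw, Matrix.mulVec_mulVec, Matrix.mul_nonsing_inv _ hM.det_pos.ne'.isUnit, Matrix.one_mulVec]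
  set t : ℝ := dotProduct v w with ht
  have h1 : c * dotProduct w w ≤ t := by
    have := hq w
    rw [hMw] at this
    rw [ht, dotProduct_comm v w]
    exact this
  have h2 : t ^ 2 ≤ dotProduct v v * dotProduct w w := by
    simpa [ht, dotProduct, pow_two] using
      Finset.sum_mul_sq_le_sq_mul_sq Finset.univ v w
  have hvv : 0 ≤ dotProduct v v := Finset.sum_nonneg fun i _ => mul_self_nonneg _
  have hww : 0 ≤ dotProduct w w := Finset.sum_nonneg fun i _ => mul_self_nonneg _
  rcases le_or_gt t 0 with h | h
  · have : 0 ≤ (1 / c) * dotProduct v v := by positivity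
    linarith
  · rw [div_mul_eq_mul_div, one_mul, le_div_iff₀ hc]
    nlinarith [mul_le_mul_of_nonneg_left h1 (le_of_lt hc)]

lemma sub_quad_eq {N : ℕ} (K : Matrix (Fin N) (Fin N) ℝ) (k : Fin N)
    (w : {i : Fin N // i < k} → ℝ) :
    dotProduct w ((((1 : Matrix (Fin N) (Fin N) ℝ) - K).submatrix
        (fun a : {i : Fin N // i < k} => a.1) (fun a : {j : Fin N // j < k} => a.1)) *ᵥ w)
      = dotProduct (extF k w) (((1 : Matrix (Fin N) (Fin N) ℝ) - K) *ᵥ extF k w) := by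
  classical
  set A := (1 : Matrix (Fin N) (Fin N) ℝ) - K with hA
  have hrow : ∀ i : {i : Fin N // i < k},
      ((A.submatrix (fun a : {i : Fin N // i < k} => a.1)
        (fun a : {j : Fin N // j < k} => a.1)) *ᵥ w) i = (A *ᵥ extF k w) i.1 := by
    intro i
    simp only [Matrix.mulVec, dotProduct, Matrix.submatrix_apply]
    exact (sum_extF k (fun j => A i.1 j) w).symm
  calc dotProduct w ((A.submatrix (fun a : {i : Fin N // i < k} => a.1)
        (fun a : {j : Fin N // j < k} => a.1)) *ᵥ w)
      = ∑ i : {i : Fin N // i < k}, (A *ᵥ extF k w) i.1 * w i := by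
        simp only [dotProduct]
        exact Finset.sum_congr rfl fun i _ => by rw [hrow i, mul_comm]
    _ = ∑ i : Fin N, (A *ᵥ extF k w) i * extF k w i :=
        (sum_extF k (fun i => (A *ᵥ extF k w) i) w).symm
    _ = dotProduct (extF k w) (A *ᵥ extF k w) := by
        simp only [dotProduct]
        exact Finset.sum_congr rfl fun i _ => mul_comm _ _

lemma extF_dot {N : ℕ} (k : Fin N) (w : {i : Fin N // i < k} → ℝ) :
    dotProduct (extF k w) (extF k w) = dotProduct w w := by
  classical
  simp only [dotProduct]
  rw [sum_extF k (extF k w) w]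
  exact Finset.sum_congr rfl fun i _ => by simp [extF, i.2]

lemma subM_quad {N : ℕ} (K : Matrix (Fin N) (Fin N) ℝ) (hH : K.IsHermitian) (lam : ℝ)
    (hmax : ∀ i, hH.eigenvalues i ≤ lam) (k : Fin N) (w : {i : Fin N // i < k} → ℝ) :
    (1 - lam) * dotProduct w w
      ≤ dotProduct w ((((1 : Matrix (Fin N) (Fin N) ℝ) - K).submatrix
          (fun a : {i : Fin N // i < k} => a.1) (fun a : {j : Fin N // j < k} => a.1)) *ᵥ w) := by
  rw [sub_quad_eq K k w]
  calc (1 - lam) * dotProduct w w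
      = (1 - lam) * dotProduct (extF k w) (extF k w) := by rw [extF_dot]
    _ ≤ _ := quadSub K hH lam hmax (extF k w)

lemma subM_posDef {N : ℕ} (K : Matrix (Fin N) (Fin N) ℝ) (hH : K.IsHermitian) (lam : ℝ)
    (hmax : ∀ i, hH.eigenvalues i ≤ lam) (hlt : lam < 1) (k : Fin N) :
    (((1 : Matrix (Fin N) (Fin N) ℝ) - K).submatrix
        (fun a : {i : Fin N // i < k} => a.1) (fun a : {j : Fin N // j < k} => a.1)).PosDef := by
  refine Matrix.PosDef.of_dotProduct_mulVec_pos ?_ ?_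
  · exact (Matrix.isHermitian_one.sub hH).submatrix _
  · intro w hw
    rw [star_trivial]
    have h1 := subM_quad K hH lam hmax k w
    have h2 : 0 < dotProduct w w := by
      rcases lt_or_eq_of_le (Finset.sum_nonneg fun i (_ : i ∈ Finset.univ) =>
        mul_self_nonneg (w i)) with h | h
      · exact h
      · exact absurd ((dotProduct_self_eq_zero).mp h.symm) hw
    have : 0 < (1 - lam) * dotProduct w w := mul_pos (by linarith) h2
    calc (0:ℝ) < (1 - lam) * dotProduct w w := this
      _ ≤ _ := h1

lemma qk_bound {N : ℕ} (K : Matrix (Fin N) (Fin N) ℝ) (hH : K.IsHermitian) (lam : ℝ)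
    (hmax : ∀ i, hH.eigenvalues i ≤ lam) (hlt : lam < 1) (k : Fin N) :
    bernoulliQ K k ≤ K k k
      + (1 / (1 - lam)) * ∑ i : {i : Fin N // i < k}, (K k i.1) ^ 2 := by
  classical
  have hsym : ∀ i j, K i j = K j i := fun i j => by
    conv_lhs => rw [← hH.eq]
    simp [Matrix.conjTranspose_apply]
  set M := (((1 : Matrix (Fin N) (Fin N) ℝ) - K).submatrix
      (fun a : {i : Fin N // i < k} => a.1) (fun a : {j : Fin N // j < k} => a.1)) with hM
  set v : {i : Fin N // i < k} → ℝ := fun i => K k i.1 with hv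
  have hdq : (∑ i : {i : Fin N // i < k}, ∑ j : {j : Fin N // j < k},
      K k i.1 * (M⁻¹ i j) * K j.1 k) = dotProduct v (M⁻¹ *ᵥ v) := by
    simp only [dotProduct, Matrix.mulVec, Finset.mul_sum]
    refine Finset.sum_congr rfl fun i _ => Finset.sum_congr rfl fun j _ => ?_
    rw [hsym j.1 k]
    ring
  have hbound := invBound M (subM_posDef K hH lam hmax hlt k) (1 - lam) (by linarith)
    (fun w => subM_quad K hH lam hmax k w) v
  have hvv : dotProduct v v = ∑ i : {i : Fin N // i < k}, (K k i.1) ^ 2 := by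
    simp only [dotProduct, hv, pow_two]
  unfold bernoulliQ
  rw [← hM]
  rw [hdq]
  rw [← hvv]
  linarith [hbound]

lemma psd_trace_nonneg {n : Type*} [Fintype n] [DecidableEq n] {B : Matrix n n ℝ}
    (hB : B.PosSemidef) : 0 ≤ Matrix.trace B := by
  refine Finset.sum_nonneg fun i _ => ?_
  have := hB.dotProduct_mulVec_nonneg (Pi.single i 1)
  simpa [dotProduct, Matrix.mulVec_single, Pi.single_apply] using this

open scoped MatrixOrder in
lemma traceKK_le {N : ℕ} (K : Matrix (Fin N) (Fin N) ℝ) (hK : K.PosSemidef) (lam : ℝ)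
    (hmax : ∀ i, hK.1.eigenvalues i ≤ lam) :
    Matrix.trace (K * K) ≤ lam * Matrix.trace K := by
  have hA := myPSD K hK.1 lam hmax
  set A := lam • (1 : Matrix (Fin N) (Fin N) ℝ) - K with hAdef
  set S := CFC.sqrt K with hS
  have hSS : S * S = K := CFC.sqrt_mul_sqrt_self K hK.nonneg
  have hSH : Sᴴ = S := (CFC.sqrt_nonneg K).posSemidef.1
  have h0 : 0 ≤ Matrix.trace (A * K) := by
    have hps : (S * A * Sᴴ).PosSemidef := hA.mul_mul_conjTranspose_same S
    rw [hSH] at hps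
    have : Matrix.trace (A * K) = Matrix.trace (S * A * S) := by
      rw [← hSS, ← Matrix.mul_assoc, Matrix.trace_mul_comm (A * S) S, ← Matrix.mul_assoc]
    rw [this]
    exact psd_trace_nonneg hps
  have hexp : A * K = lam • K - K * K := by
    rw [hAdef, Matrix.sub_mul, Matrix.smul_mul, one_mul]
  rw [hexp, Matrix.trace_sub, Matrix.trace_smul] at h0
  rw [smul_eq_mul] at h0
  linarith

lemma S_bound {N : ℕ} (K : Matrix (Fin N) (Fin N) ℝ) (hH : K.IsHermitian) :
    2 * ∑ k : Fin N, ∑ i : {i : Fin N // i < k}, (K k i.1) ^ 2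
      ≤ Matrix.trace (K * K) := by
  classical
  have hsym : ∀ i j, K i j = K j i := fun i j => by
    conv_lhs => rw [← hH.eq]
    simp [Matrix.conjTranspose_apply]
  set f : Fin N → Fin N → ℝ := fun k i => (K k i) ^ 2 with hf
  have hfsym : ∀ k i, f k i = f i k := fun k i => by rw [hf]; simp [hsym k i]
  have hsubty : ∀ k : Fin N, ∑ i : {i : Fin N // i < k}, (K k i.1) ^ 2
      = ∑ i ∈ Finset.univ.filter (fun i => i < k), f k i := by
    intro k
    rw [Finset.sum_subtype (p := fun i => i < k) (Finset.univ.filter (fun i => i < k))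
      (by simp) (fun i => f k i)]
  set A : ℝ := ∑ k : Fin N, ∑ i ∈ Finset.univ.filter (fun i => i < k), f k i with hA
  set B : ℝ := ∑ k : Fin N, ∑ i ∈ Finset.univ.filter (fun i => k < i), f k i with hB
  have hAB : A = B := by
    rw [hA, hB]
    have h1 : ∀ k : Fin N, ∑ i ∈ Finset.univ.filter (fun i => i < k), f k i
        = ∑ i : Fin N, if i < k then f k i else 0 := fun k => by
      rw [Finset.sum_filter]
    have h2 : ∀ k : Fin N, ∑ i ∈ Finset.univ.filter (fun i => k < i), f k i
        = ∑ i : Fin N, if k < i then f k i else 0 := fun k => by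
      rw [Finset.sum_filter]
    simp only [h1, h2]
    rw [Finset.sum_comm]
    refine Finset.sum_congr rfl fun k _ => Finset.sum_congr rfl fun i _ => ?_
    by_cases h : k < i
    · simp [h, hfsym]
    · simp [h]
  have htr : Matrix.trace (K * K) = ∑ k : Fin N, ∑ i : Fin N, f k i := by
    simp only [Matrix.trace, Matrix.diag, Matrix.mul_apply]
    refine Finset.sum_congr rfl fun k _ => Finset.sum_congr rfl fun i _ => ?_
    rw [hf]
    simp [pow_two, hsym i k]
  have hle : A + B ≤ ∑ k : Fin N, ∑ i : Fin N, f k i := by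
    rw [hA, hB, ← Finset.sum_add_distrib]
    refine Finset.sum_le_sum fun k _ => ?_
    rw [← Finset.sum_union (by
      simp only [Finset.disjoint_filter]
      intro x _ h1 h2
      exact absurd h2 (not_lt.mpr (le_of_lt h1)))]
    refine Finset.sum_le_sum_of_subset_of_nonneg (Finset.subset_univ _) fun i _ _ => ?_
    positivity
  calc 2 * ∑ k : Fin N, ∑ i : {i : Fin N // i < k}, (K k i.1) ^ 2
      = A + B := by
        simp only [hsubty]
        rw [← hAB, hA]
        ring
    _ ≤ ∑ k : Fin N, ∑ i : Fin N, f k i := hle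
    _ = Matrix.trace (K * K) := htr.symm


/-- Cardinality bound for the dominating Bernoulli process: if `λ_max(K) < 1` then
`𝔼(|X|) = Σ_k q_k ≤ (1 + λ_max/(2(1−λ_max))) Tr(K)` and `Tr(K) = 𝔼(|Y|)`. -/
theorem bernoulli_cardinal_bound {N : ℕ} (K : Matrix (Fin N) (Fin N) ℝ)
    (hK : K.PosSemidef) (lam : ℝ)
    (hmax : ∀ i, hK.1.eigenvalues i ≤ lam)
    (hatt : ∃ i, hK.1.eigenvalues i = lam)
    (hlt : lam < 1)
    (P : Finset (Fin N) → ℝ) (hPnn : ∀ C, 0 ≤ P C)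
    (hP : ∀ A : Finset (Fin N),
      ∑ B ∈ Finset.univ.filter (fun B => A ⊆ B), P B = (subMat K A).det) :
    (∑ k : Fin N, bernoulliQ K k ≤ (1 + lam / (2 * (1 - lam))) * K.trace) ∧
    (∑ C : Finset (Fin N), (C.card : ℝ) * P C = K.trace) := by
  classical
  have htr : K.trace = ∑ k : Fin N, K k k := by simp [Matrix.trace, Matrix.diag]
  constructor
  · -- first part
    set S : ℝ := ∑ k : Fin N, ∑ i : {i : Fin N // i < k}, (K k i.1) ^ 2 with hSdef
    have h1 : ∑ k : Fin N, bernoulliQ K k ≤ K.trace + (1 / (1 - lam)) * S := by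
      calc ∑ k : Fin N, bernoulliQ K k
          ≤ ∑ k : Fin N, (K k k + (1 / (1 - lam)) * ∑ i : {i : Fin N // i < k}, (K k i.1) ^ 2) :=
            Finset.sum_le_sum fun k _ => qk_bound K hK.1 lam hmax hlt k
        _ = K.trace + (1 / (1 - lam)) * S := by
            rw [Finset.sum_add_distrib, htr, ← Finset.mul_sum]
    have h2 := S_bound K hK.1
    have h3 := traceKK_le K hK lam hmax
    have hc : (0:ℝ) < 1 - lam := by linarith
    have hS : S ≤ lam * K.trace / 2 := by linarith
    have h4 : (1 / (1 - lam)) * S ≤ (1 / (1 - lam)) * (lam * K.trace / 2) :=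
      mul_le_mul_of_nonneg_left hS (by positivity)
    have heq : K.trace + (1 / (1 - lam)) * (lam * K.trace / 2)
        = (1 + lam / (2 * (1 - lam))) * K.trace := by
      field_simp
    linarith
  · -- second part
    have hsingle : ∀ k : Fin N,
        ∑ B ∈ Finset.univ.filter (fun B => k ∈ B), P B = K k k := by
      intro k
      have h := hP {k}
      have hfil : Finset.univ.filter (fun B => ({k} : Finset (Fin N)) ⊆ B)
          = Finset.univ.filter (fun B => k ∈ B) := by
        apply Finset.filter_congr
        intro B _
        simp [Finset.singleton_subset_iff]
      haveI : Unique {x // x ∈ ({k} : Finset (Fin N))} :=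
        ⟨⟨⟨k, Finset.mem_singleton_self k⟩⟩,
          fun a => Subtype.ext (Finset.mem_singleton.mp a.2)⟩
      have hdet : (subMat K ({k} : Finset (Fin N))).det = K k k := by
        rw [Matrix.det_unique]
        have hd : ((default : {x // x ∈ ({k} : Finset (Fin N))}) : Fin N) = k :=
          Finset.mem_singleton.mp (Subtype.mem _)
        simp [subMat, Matrix.submatrix_apply, hd]
      rw [hfil] at h
      rw [h, hdet]
    calc ∑ C : Finset (Fin N), (C.card : ℝ) * P C
        = ∑ C : Finset (Fin N), ∑ k : Fin N, (if k ∈ C then P C else 0) := by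
          refine Finset.sum_congr rfl fun C _ => ?_
          rw [Finset.sum_ite_mem, Finset.univ_inter, Finset.sum_const, nsmul_eq_mul]
      _ = ∑ k : Fin N, ∑ C : Finset (Fin N), (if k ∈ C then P C else 0) :=
          Finset.sum_comm
      _ = ∑ k : Fin N, ∑ B ∈ Finset.univ.filter (fun B => k ∈ B), P B := by
          refine Finset.sum_congr rfl fun k _ => ?_
          rw [Finset.sum_filter]
      _ = ∑ k : Fin N, K k k := Finset.sum_congr rfl fun k _ => hsingle k
      _ = K.trace := htr.symm
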